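/- Let $N$ and $H$ be left braces and let $\alpha: (H,\circ) \to \mathrm{Aut}(N)$ be an action of the multiplicative group of $H$ by automorphisms of $N$ that preserve both operations of $N$ (brace automorphisms). Then the semidirect product $G = N \rtimes_\alpha H$ with multiplication $(a,h)(b,k) = (a \circ \alpha_h(b), h\circ k)$ and addition $(a,h)+(b,k) = (a+b, h+k)$ is a left brace. -/

import Mathlib

/-- Multiplication of the semidirect product of braces `N ⋊_α H`. -/
def sdMul {N H : Type*} [Group N] [Group H] (α : H → N → N) (p q : N × H) : N × H :=
  (p.1 * α p.2 q.1, p.2 * q.2)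

/-- Addition of the semidirect product of braces: componentwise. -/
def sdAdd {N H : Type*} [AddCommGroup N] [AddCommGroup H] (p q : N × H) : N × H :=
  (p.1 + q.1, p.2 + q.2)

/-- Let `N` and `H` be left braces and let `α` be an action of the multiplicative group of
`H` on `N` by brace automorphisms (bijections preserving both `·` and `+`).  Then the
semidirect product `N ⋊_α H`, with multiplication `(a,h)(b,k) = (a · α_h(b), h·k)` and
componentwise addition, is a left brace: the multiplication is a group operation with
identity `(1,1)`, the addition is an abelian group operation (componentwise), and the
left-brace identity `a(b+c) + a = ab + ac` holds. -/
theorem stmt7 {N H : Type*} [AddCommGroup N] [Group N] [AddCommGroup H] [Group H]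
    (hN : ∀ a b c : N, a * (b + c) + a = a * b + a * c)
    (hH : ∀ a b c : H, a * (b + c) + a = a * b + a * c)
    (α : H → N → N)
    (hbij : ∀ h : H, Function.Bijective (α h))
    (hmul : ∀ (h : H) (a b : N), α h (a * b) = α h a * α h b)
    (hadd : ∀ (h : H) (a b : N), α h (a + b) = α h a + α h b)
    (hcomp : ∀ (h k : H) (a : N), α (h * k) a = α h (α k a))
    (hone : ∀ a : N, α 1 a = a) :
    (∀ p q s : N × H, sdMul α (sdMul α p q) s = sdMul α p (sdMul α q s)) ∧
    (∀ p : N × H, sdMul α ((1 : N), (1 : H)) p = p ∧ sdMul α p ((1 : N), (1 : H)) = p) ∧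
    (∀ p : N × H, ∃ q : N × H, sdMul α p q = ((1 : N), (1 : H)) ∧
      sdMul α q p = ((1 : N), (1 : H))) ∧
    (∀ a b c : N × H, sdAdd (sdMul α a (sdAdd b c)) a = sdAdd (sdMul α a b) (sdMul α a c)) := by
  have hone' : ∀ h : H, α h 1 = 1 := by
    intro h
    have := hmul h 1 1
    rw [one_mul] at this
    exact right_eq_mul.mp this
  refine ⟨?_, ?_, ?_, ?_⟩
  · intro p q s
    simp [sdMul, hmul, hcomp, mul_assoc]
  · intro p
    constructor <;> simp [sdMul, hone, hone']
  · intro p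
    refine ⟨(α p.2⁻¹ p.1⁻¹, p.2⁻¹), ?_, ?_⟩
    · simp [sdMul, ← hcomp, hone]
    · simp only [sdMul, ← hmul, inv_mul_cancel, hone', Prod.mk.injEq, and_true]
  · intro a b c
    simp only [sdMul, sdAdd, hadd, Prod.mk.injEq]
    exact ⟨hN _ _ _, hH _ _ _⟩
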